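/- Let P be a set of n points in general position in the plane with n large (n > 100), and R a set with n ≤ |R| < (3/2)n, disjoint from P, such that every line through two points of P contains a point of R. If P ∪ R is contained in the union of a quadric Q and the line at infinity ℓ, then no point of P lies on ℓ (so P ⊆ Q). -/

import Mathlib

/-- The real projective plane. -/
noncomputable abbrev ProjPlane := Projectivization ℝ (Fin 3 → ℝ)

/-- Three points of the projective plane are collinear if their representative lines all
lie in a single subspace of dimension at most `2`. -/
def ProjCollinear (p q r : ProjPlane) : Prop :=
  ∃ W : Submodule ℝ (Fin 3 → ℝ), Module.finrank ℝ W ≤ 2 ∧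
    p.submodule ≤ W ∧ q.submodule ≤ W ∧ r.submodule ≤ W

/-- The line at infinity (points with vanishing last homogeneous coordinate). -/
def lineAtInfinity : Set ProjPlane := {p : ProjPlane | p.rep 2 = 0}

open Module Submodule in
private lemma pp_indep {u v : ProjPlane} (h : u ≠ v) :
    LinearIndependent ℝ ![u.rep, v.rep] := by
  have h1 := (Projectivization.independent_pair_iff_ne u v).2 h
  rw [Projectivization.independent_iff] at h1
  have heq : Projectivization.rep ∘ ![u, v] = ![u.rep, v.rep] := by
    ext i; fin_cases i <;> rfl
  rwa [heq] at h1

open Module Submodule in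
private lemma finrank_span_pair {u v : Fin 3 → ℝ} (h : LinearIndependent ℝ ![u, v]) :
    Module.finrank ℝ (span ℝ ({u, v} : Set (Fin 3 → ℝ))) = 2 := by
  have hr : ({u, v} : Set (Fin 3 → ℝ)) = Set.range ![u, v] := by
    rw [Matrix.range_cons_cons_empty]
  rw [hr, finrank_span_eq_card h]
  simp

open Module Submodule in
private lemma eq_of_rep_mem_span {u v : ProjPlane}
    (h : u.rep ∈ span ℝ ({v.rep} : Set (Fin 3 → ℝ))) : u = v := by
  apply Projectivization.submodule_injective
  rw [Projectivization.submodule_eq, Projectivization.submodule_eq]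
  apply Submodule.eq_of_le_of_finrank_le
  · rwa [Submodule.span_singleton_le_iff_mem]
  · rw [finrank_span_singleton u.rep_nonzero, finrank_span_singleton v.rep_nonzero]

open Module Submodule in
private lemma collinear_iff {a b c : ProjPlane} (hab : a ≠ b) :
    ProjCollinear a b c ↔ c.rep ∈ span ℝ ({a.rep, b.rep} : Set (Fin 3 → ℝ)) := by
  constructor
  · rintro ⟨W, hW2, ha, hb, hc⟩
    have ha' : a.rep ∈ W := by
      rw [Projectivization.submodule_eq, Submodule.span_singleton_le_iff_mem] at ha; exact ha
    have hb' : b.rep ∈ W := by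
      rw [Projectivization.submodule_eq, Submodule.span_singleton_le_iff_mem] at hb; exact hb
    have hc' : c.rep ∈ W := by
      rw [Projectivization.submodule_eq, Submodule.span_singleton_le_iff_mem] at hc; exact hc
    have hle : span ℝ ({a.rep, b.rep} : Set (Fin 3 → ℝ)) ≤ W := by
      rw [Submodule.span_le]; rintro z (rfl | rfl) <;> assumption
    have heq : span ℝ ({a.rep, b.rep} : Set (Fin 3 → ℝ)) = W := by
      apply Submodule.eq_of_le_of_finrank_le hle
      rw [finrank_span_pair (pp_indep hab)]; exact hW2
    rw [heq]; exact hc'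
  · intro h
    refine ⟨span ℝ ({a.rep, b.rep} : Set (Fin 3 → ℝ)), ?_, ?_, ?_, ?_⟩
    · rw [finrank_span_pair (pp_indep hab)]
    · rw [Projectivization.submodule_eq, Submodule.span_singleton_le_iff_mem]
      exact Submodule.subset_span (Set.mem_insert _ _)
    · rw [Projectivization.submodule_eq, Submodule.span_singleton_le_iff_mem]
      exact Submodule.subset_span (Set.mem_insert_of_mem _ rfl)
    · rwa [Projectivization.submodule_eq, Submodule.span_singleton_le_iff_mem]

open Module Submodule in
private lemma line_eq {p x r : ProjPlane} (hpx : p ≠ x) (hpr : p ≠ r)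
    (h : r.rep ∈ span ℝ ({p.rep, x.rep} : Set (Fin 3 → ℝ))) :
    span ℝ ({p.rep, r.rep} : Set (Fin 3 → ℝ)) = span ℝ ({p.rep, x.rep} : Set (Fin 3 → ℝ)) := by
  apply Submodule.eq_of_le_of_finrank_le
  · rw [Submodule.span_le]
    rintro z (rfl | rfl)
    · exact Submodule.subset_span (Set.mem_insert _ _)
    · exact h
  · rw [finrank_span_pair (pp_indep hpx), finrank_span_pair (pp_indep hpr)]

open Module Submodule in
private lemma triangle {p x y r : ProjPlane} (hpx : p ≠ x) (hpy : p ≠ y) (hpr : p ≠ r)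
    (hx : r.rep ∈ span ℝ ({p.rep, x.rep} : Set (Fin 3 → ℝ)))
    (hy : r.rep ∈ span ℝ ({p.rep, y.rep} : Set (Fin 3 → ℝ))) :
    ProjCollinear p x y := by
  rw [collinear_iff hpx]
  rw [← line_eq hpx hpr hx, line_eq hpy hpr hy]
  exact Submodule.subset_span (Set.mem_insert_of_mem _ rfl)

open Module Submodule in
private lemma collinear_of_inf {a b c : ProjPlane} (ha : a ∈ lineAtInfinity)
    (hb : b ∈ lineAtInfinity) (hc : c ∈ lineAtInfinity) : ProjCollinear a b c := by
  set f : (Fin 3 → ℝ) →ₗ[ℝ] ℝ := LinearMap.proj (R := ℝ) (φ := fun _ : Fin 3 => ℝ) 2 with hf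
  refine ⟨LinearMap.ker f, ?_, ?_, ?_, ?_⟩
  · have h1 := LinearMap.finrank_range_add_finrank_ker f
    have h2 : LinearMap.range f = ⊤ :=
      LinearMap.range_eq_top.2 (fun y => ⟨fun _ => y, rfl⟩)
    have h3 : finrank ℝ (Fin 3 → ℝ) = 3 := by simp
    rw [h2, finrank_top] at h1
    simp only [Module.finrank_self] at h1
    omega
  all_goals
    rw [Projectivization.submodule_eq, Submodule.span_singleton_le_iff_mem,
      LinearMap.mem_ker]
  · exact ha
  · exact hb
  · exact hc

open Module Submodule QuadraticMap in
private lemma conic_line (q : QuadraticForm ℝ (Fin 3 → ℝ))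
    (hq : ∀ v : Fin 3 → ℝ, (∀ w : Fin 3 → ℝ, QuadraticMap.polar (⇑q) v w = 0) → v = 0)
    {a b c : ProjPlane} (hab : a ≠ b) (hac : a ≠ c) (hbc : b ≠ c)
    (ha : q a.rep = 0) (hb : q b.rep = 0) (hc : q c.rep = 0)
    (hmem : c.rep ∈ span ℝ ({a.rep, b.rep} : Set (Fin 3 → ℝ))) : False := by
  obtain ⟨α, β, hβα⟩ := Submodule.mem_span_pair.1 hmem
  have hα : α ≠ 0 := by
    rintro rfl
    refine hbc (eq_of_rep_mem_span ?_).symm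
    rw [Submodule.mem_span_singleton]
    exact ⟨β, by simpa using hβα⟩
  have hβ : β ≠ 0 := by
    rintro rfl
    refine hac (eq_of_rep_mem_span ?_).symm
    rw [Submodule.mem_span_singleton]
    exact ⟨α, by simpa using hβα⟩
  have hpol : polar (⇑q) a.rep b.rep = 0 := by
    have h0 : q (α • a.rep + β • b.rep) = 0 := by rw [hβα]; exact hc
    have hexp : q (α • a.rep + β • b.rep)
        = q (α • a.rep) + q (β • b.rep) + polar (⇑q) (α • a.rep) (β • b.rep) := by
      simp only [QuadraticMap.polar]; ring
    rw [hexp, polar_smul_left, polar_smul_right, QuadraticMap.map_smul,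
      QuadraticMap.map_smul, ha, hb] at h0
    simp only [smul_eq_mul, mul_zero, zero_add] at h0
    rcases mul_eq_zero.1 h0 with h | h
    · exact absurd h hα
    rcases mul_eq_zero.1 h with h | h
    · exact absurd h hβ
    · exact h
  have hpaa : polar (⇑q) a.rep a.rep = 0 := by
    rw [polar_self, ha]; simp
  have hpbb : polar (⇑q) b.rep b.rep = 0 := by
    rw [polar_self, hb]; simp
  -- find u outside the span
  set W := span ℝ ({a.rep, b.rep} : Set (Fin 3 → ℝ)) with hW
  have hWr : finrank ℝ W = 2 := finrank_span_pair (pp_indep hab)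
  have hV3 : finrank ℝ (Fin 3 → ℝ) = 3 := by simp
  have hWne : W ≠ ⊤ := by
    intro h
    rw [h, finrank_top, hV3] at hWr
    omega
  obtain ⟨u, huW⟩ : ∃ u, u ∉ W := by
    by_contra h
    push_neg at h
    exact hWne (Submodule.eq_top_iff'.2 h)
  set T := span ℝ ({a.rep, b.rep, u} : Set (Fin 3 → ℝ)) with hT
  have hWT : W ≤ T := Submodule.span_mono (by intro z hz; simp at hz ⊢; tauto)
  have huT : u ∈ T := Submodule.subset_span (by simp)
  have hlt : W < T := hWT.lt_of_ne (fun h => huW (h ▸ huT))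
  have hTtop : T = ⊤ := by
    apply Submodule.eq_top_of_finrank_eq
    have h1 : finrank ℝ W < finrank ℝ T := Submodule.finrank_lt_finrank_of_lt hlt
    have h2 : finrank ℝ T ≤ finrank ℝ (Fin 3 → ℝ) := Submodule.finrank_le T
    omega
  have key : ∀ v : Fin 3 → ℝ, polar (⇑q) v a.rep = 0 → polar (⇑q) v b.rep = 0 →
      polar (⇑q) v u = 0 → v = 0 := by
    intro v h1 h2 h3
    apply hq v
    intro w
    have hw : w ∈ T := hTtop ▸ Submodule.mem_top
    induction hw using Submodule.span_induction with
    | mem x hx =>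
      rcases hx with rfl | rfl | rfl
      · exact h1
      · exact h2
      · exact h3
    | zero => exact polar_zero_right q v
    | add x y _ _ hx hy => rw [polar_add_right, hx, hy, add_zero]
    | smul c x _ hx => rw [polar_smul_right, hx, smul_zero]
  by_cases hau : polar (⇑q) a.rep u = 0
  · exact a.rep_nonzero (key a.rep hpaa hpol hau)
  · set pau := polar (⇑q) a.rep u with hpau
    set pbu := polar (⇑q) b.rep u with hpbu
    set v := pbu • a.rep - pau • b.rep with hv
    have e1 : polar (⇑q) v a.rep = 0 := by
      rw [hv, polar_sub_left, polar_smul_left, polar_smul_left, hpaa,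
        polar_comm (⇑q) b.rep a.rep, hpol]
      simp
    have e2 : polar (⇑q) v b.rep = 0 := by
      rw [hv, polar_sub_left, polar_smul_left, polar_smul_left, hpbb, hpol]
      simp
    have e3 : polar (⇑q) v u = 0 := by
      rw [hv, polar_sub_left, polar_smul_left, polar_smul_left, ← hpau, ← hpbu]
      simp [mul_comm]
    have hv0 : v = 0 := key v e1 e2 e3
    have heq : pbu • a.rep = pau • b.rep := by
      rw [hv, sub_eq_zero] at hv0; exact hv0
    have hbmem : b.rep ∈ span ℝ ({a.rep} : Set (Fin 3 → ℝ)) := by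
      rw [Submodule.mem_span_singleton]
      refine ⟨pau⁻¹ * pbu, ?_⟩
      rw [mul_smul, heq, smul_smul, inv_mul_cancel₀ hau, one_smul]
    exact hab (eq_of_rep_mem_span hbmem).symm

/-- Let `P` be a set of `n > 100` points of the projective plane in general position and
`R` a set disjoint from `P` with `n ≤ |R| < (3/2)n` such that every line through two
points of `P` contains a point of `R`. If `P ∪ R` is contained in the union of a
nondegenerate conic `Q` (zero set of a nondegenerate quadratic form `q`) and the line at
infinity `ℓ`, then no point of `P` lies on `ℓ`, so `P` is contained in `Q`. -/
theorem stmt_19 (n : ℕ) (hn : 100 < n) (P R : Set ProjPlane)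
    (hfinP : P.Finite) (hfinR : R.Finite)
    (hP : P.ncard = n)
    (hgen : ∀ x ∈ P, ∀ y ∈ P, ∀ z ∈ P, x ≠ y → x ≠ z → y ≠ z → ¬ ProjCollinear x y z)
    (hdisj : Disjoint P R)
    (hRlow : n ≤ R.ncard) (hRup : 2 * R.ncard < 3 * n)
    (q : QuadraticForm ℝ (Fin 3 → ℝ))
    (hq : ∀ v : Fin 3 → ℝ, (∀ w : Fin 3 → ℝ, QuadraticMap.polar (⇑q) v w = 0) → v = 0)
    (hcontain : P ∪ R ⊆ {p : ProjPlane | q p.rep = 0} ∪ lineAtInfinity)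
    (hpierce : ∀ x ∈ P, ∀ y ∈ P, x ≠ y → ∃ r ∈ R, ProjCollinear x y r) :
    (∀ p ∈ P, p ∉ lineAtInfinity) ∧ P ⊆ {p : ProjPlane | q p.rep = 0} := by
  have key : ∀ p ∈ P, p ∉ lineAtInfinity := by
    intro p hpP hpl
    set A : Set ProjPlane := P \ lineAtInfinity with hA
    have hfinA : A.Finite := hfinP.diff
    have hPl : (P ∩ lineAtInfinity).ncard ≤ 2 := by
      by_contra h
      push_neg at h
      obtain ⟨a, ha, b, hb, c, hc, hab, hac, hbc⟩ :=
        (Set.two_lt_ncard (hfinP.inter_of_left _)).1 h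
      exact hgen a ha.1 b hb.1 c hc.1 hab hac hbc (collinear_of_inf ha.2 hb.2 hc.2)
    have hcardA : (P ∩ lineAtInfinity).ncard + A.ncard = n := by
      rw [← hP]
      exact Set.ncard_inter_add_ncard_diff_eq_ncard P lineAtInfinity hfinP
    -- First injection : A → R \ ℓ
    have h1 : ∀ x ∈ A, ∃ r, (r ∈ R \ lineAtInfinity) ∧ ProjCollinear p x r := by
      intro x hx
      have hpx : p ≠ x := by rintro rfl; exact hx.2 hpl
      obtain ⟨r, hrR, hcol⟩ := hpierce p hpP x hx.1 hpx
      have hpr : p ≠ r := by rintro rfl; exact Set.disjoint_left.1 hdisj hpP hrR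
      rw [collinear_iff hpx] at hcol
      refine ⟨r, ⟨hrR, ?_⟩, (collinear_iff hpx).2 hcol⟩
      intro hrl
      obtain ⟨α, β, hαβ⟩ := Submodule.mem_span_pair.1 hcol
      have h2 : α * p.rep 2 + β * x.rep 2 = r.rep 2 := by
        have := congrFun hαβ 2
        simpa using this
      have hp2 : p.rep 2 = 0 := hpl
      have hr2 : r.rep 2 = 0 := hrl
      have hx2 : x.rep 2 ≠ 0 := hx.2
      have hβ0 : β = 0 := by
        rw [hp2, hr2] at h2
        simp at h2
        rcases h2 with h | h
        · exact h
        · exact absurd h hx2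
      apply hpr
      apply (eq_of_rep_mem_span ?_).symm
      rw [Submodule.mem_span_singleton]
      refine ⟨α, ?_⟩
      rw [hβ0] at hαβ
      simpa using hαβ
    choose! f hf using h1
    have hinj1 : Set.InjOn f A := by
      intro x hx y hy hxy
      by_contra hne
      have hpx : p ≠ x := by rintro rfl; exact hx.2 hpl
      have hpy : p ≠ y := by rintro rfl; exact hy.2 hpl
      have hpr : p ≠ f x := by
        rintro hpr
        exact Set.disjoint_left.1 hdisj hpP (hpr ▸ (hf x hx).1.1)
      have hcx := (collinear_iff hpx).1 (hf x hx).2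
      have hcy := (collinear_iff hpy).1 (hf y hy).2
      rw [hxy] at hcx hpr
      exact hgen p hpP x hx.1 y hy.1 hpx hpy hne (triangle hpx hpy hpr hcx hcy)
    have hcard1 : A.ncard ≤ (R \ lineAtInfinity).ncard :=
      Set.ncard_le_ncard_of_injOn f (fun a ha => (hf a ha).1) hinj1 hfinR.diff
    -- Second injection : A \ {x₀} → R ∩ ℓ
    have hApos : 0 < A.ncard := by omega
    obtain ⟨x₀, hx₀⟩ := (Set.ncard_pos hfinA).1 hApos
    have hqx₀ : q x₀.rep = 0 := by
      rcases hcontain (Set.mem_union_left _ hx₀.1) with h | h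
      · exact h
      · exact absurd h hx₀.2
    have h2 : ∀ y ∈ A \ {x₀}, ∃ r, (r ∈ R ∩ lineAtInfinity) ∧ ProjCollinear x₀ y r := by
      intro y hy
      have hx₀y : x₀ ≠ y := fun h => hy.2 h.symm
      obtain ⟨r, hrR, hcol⟩ := hpierce x₀ hx₀.1 y hy.1.1 hx₀y
      have hqy : q y.rep = 0 := by
        rcases hcontain (Set.mem_union_left _ hy.1.1) with h | h
        · exact h
        · exact absurd h hy.1.2
      have hx₀r : x₀ ≠ r := by rintro rfl; exact Set.disjoint_left.1 hdisj hx₀.1 hrR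
      have hyr : y ≠ r := by rintro rfl; exact Set.disjoint_left.1 hdisj hy.1.1 hrR
      refine ⟨r, ⟨hrR, ?_⟩, hcol⟩
      rcases hcontain (Set.mem_union_right _ hrR) with h | h
      · exact absurd ((collinear_iff hx₀y).1 hcol)
          (fun hm => conic_line q hq hx₀y hx₀r hyr hqx₀ hqy h hm)
      · exact h
    choose! g hg using h2
    have hinj2 : Set.InjOn g (A \ {x₀}) := by
      intro y hy y' hy' hyy'
      by_contra hne
      have hx₀y : x₀ ≠ y := fun h => hy.2 h.symm
      have hx₀y' : x₀ ≠ y' := fun h => hy'.2 h.symm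
      have hx₀r : x₀ ≠ g y := by
        rintro hx₀r
        exact Set.disjoint_left.1 hdisj hx₀.1 (hx₀r ▸ (hg y hy).1.1)
      have hcy := (collinear_iff hx₀y).1 (hg y hy).2
      have hcy' := (collinear_iff hx₀y').1 (hg y' hy').2
      rw [hyy'] at hcy hx₀r
      exact hgen x₀ hx₀.1 y hy.1.1 y' hy'.1.1 hx₀y hx₀y' hne
        (triangle hx₀y hx₀y' hx₀r hcy hcy')
    have hcard2 : (A \ {x₀}).ncard ≤ (R ∩ lineAtInfinity).ncard :=
      Set.ncard_le_ncard_of_injOn g (fun a ha => (hg a ha).1) hinj2 (hfinR.inter_of_left _)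
    have hAx₀ : (A \ {x₀}).ncard = A.ncard - 1 :=
      Set.ncard_diff_singleton_of_mem hx₀
    have hsplit : (R ∩ lineAtInfinity).ncard + (R \ lineAtInfinity).ncard = R.ncard :=
      Set.ncard_inter_add_ncard_diff_eq_ncard R lineAtInfinity hfinR
    omega
  refine ⟨key, fun p hp => ?_⟩
  rcases hcontain (Set.mem_union_left _ hp) with h | h
  · exact h
  · exact absurd h (key p hp)
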